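/- Let k ≥ 2 and let {t_n} be the 2k-nacci sequence. Then for all n ≥ 0 and 0 ≤ i ≤ 2k-1, t_{n+2k+1+i} = 2·2^i · Σ_{j=0}^{2k-1} t_{n+j} − Σ_{j=0}^{i} 2^{i-j} t_{n+j}. -/

import Mathlib

theorem twoknacci_push_formula (k : ℕ) (hk : 2 ≤ k) (t : ℕ → ℕ)
    (h0 : t 0 = 0)
    (h1 : ∀ n, 1 ≤ n → n ≤ 2 * k - 1 → t n = 1)
    (hrec : ∀ n, 2 * k ≤ n → t n = ∑ i ∈ Finset.Icc 1 (2 * k), t (n - i)) :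
    ∀ n i : ℕ, i ≤ 2 * k - 1 →
      (t (n + 2 * k + 1 + i) : ℤ) =
        2 * 2 ^ i * ∑ j ∈ Finset.range (2 * k), (t (n + j) : ℤ) -
          ∑ j ∈ Finset.range (i + 1), 2 ^ (i - j) * (t (n + j) : ℤ) := by
  -- helper A : window sum
  have hA : ∀ n : ℕ, t (n + 2 * k) = ∑ j ∈ Finset.range (2 * k), t (n + j) := by
    intro n
    rw [hrec (n + 2 * k) (by omega)]
    apply Finset.sum_bij' (fun i _ => 2 * k - i) (fun j _ => 2 * k - j)
    · intro i hi
      simp only [Finset.mem_Icc] at hi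
      simp only [Finset.mem_range]; omega
    · intro j hj
      simp only [Finset.mem_range] at hj
      simp only [Finset.mem_Icc]; omega
    · intro i hi
      simp only [Finset.mem_Icc] at hi; omega
    · intro j hj
      simp only [Finset.mem_range] at hj; omega
    · intro i hi
      simp only [Finset.mem_Icc] at hi
      congr 1; omega
  -- helper B : t(m+1) + t(m-2k) = 2 * t m for m ≥ 2k
  have hB : ∀ m : ℕ, 2 * k ≤ m → t (m + 1) + t (m - 2 * k) = 2 * t m := by
    intro m hm
    have e1 : t (m + 1) = t m + ∑ i ∈ Finset.Icc 1 (2 * k - 1), t (m - i) := by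
      rw [hrec (m + 1) (by omega)]
      have : ∑ i ∈ Finset.Icc 1 (2 * k), t (m + 1 - i)
          = ∑ i ∈ Finset.Icc 0 (2 * k - 1), t (m - i) := by
        apply Finset.sum_bij' (fun i _ => i - 1) (fun j _ => j + 1)
        all_goals intro a ha
        all_goals simp only [Finset.mem_Icc] at ha ⊢
        all_goals try omega
        all_goals (congr 1; omega)
      rw [this]
      rw [show Finset.Icc 0 (2 * k - 1) = insert 0 (Finset.Icc 1 (2 * k - 1)) by
        ext x; simp only [Finset.mem_insert, Finset.mem_Icc]; omega]
      rw [Finset.sum_insert (by simp)]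
      simp
    have e2 : t m = (∑ i ∈ Finset.Icc 1 (2 * k - 1), t (m - i)) + t (m - 2 * k) := by
      rw [hrec m hm]
      rw [show Finset.Icc 1 (2 * k) = insert (2 * k) (Finset.Icc 1 (2 * k - 1)) by
        ext x; simp only [Finset.mem_insert, Finset.mem_Icc]; omega]
      rw [Finset.sum_insert (by simp only [Finset.mem_Icc]; omega)]
      ring
    omega
  intro n i _
  clear h0 h1
  induction i with
  | zero =>
    have hb := hB (n + 2 * k) (by omega)
    have ha := hA n
    have hsub : n + 2 * k - 2 * k = n := by omega
    rw [hsub] at hb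
    simp only [Nat.zero_add, Nat.add_zero, Finset.sum_range_one, pow_zero, mul_one,
      Nat.sub_zero]
    have : (t (n + 2 * k + 1) : ℤ) + t n = 2 * t (n + 2 * k) := by exact_mod_cast hb
    rw [ha] at this
    push_cast at this ⊢
    linarith
  | succ i ih =>
    have hb := hB (n + 2 * k + 1 + i) (by omega)
    have hsub : n + 2 * k + 1 + i - 2 * k = n + 1 + i := by omega
    rw [hsub] at hb
    have hbz : (t (n + 2 * k + 1 + i + 1) : ℤ) + t (n + 1 + i)
        = 2 * t (n + 2 * k + 1 + i) := by exact_mod_cast hb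
    have hstep : n + 2 * k + 1 + (i + 1) = n + 2 * k + 1 + i + 1 := by ring
    rw [hstep]
    rw [Finset.sum_range_succ]
    have hsum : ∑ j ∈ Finset.range (i + 1), (2:ℤ) ^ (i + 1 - j) * (t (n + j) : ℤ)
        = 2 * ∑ j ∈ Finset.range (i + 1), (2:ℤ) ^ (i - j) * (t (n + j) : ℤ) := by
      rw [Finset.mul_sum]
      apply Finset.sum_congr rfl
      intro j hj
      simp only [Finset.mem_range] at hj
      have : i + 1 - j = (i - j) + 1 := by omega
      rw [this, pow_succ]
      ring
    rw [hsum]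
    have hni : n + 1 + i = n + (i + 1) := by ring
    rw [hni] at hbz
    have h2 : i + 1 - (i + 1) = 0 := by omega
    rw [h2, pow_zero, one_mul, pow_succ]
    linarith [ih (by omega)]
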